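/- If a graph G is (α, ρ, ε/4, 2)-sparse, then for every positive integer h, G is ((2/ρ)^{h-1} α, 2^{1-h} ρ^h, ε, 2^h)-sparse. -/

import Mathlib

/-- The number of (ordered) adjacent pairs with first coordinate in `A` and second in `B`;
for disjoint `A`, `B` this is the number of edges between `A` and `B`. -/
noncomputable def eBetween {V : Type*} (G : SimpleGraph V) (A B : Finset V) : ℕ :=
  {p : V × V | p.1 ∈ A ∧ p.2 ∈ B ∧ G.Adj p.1 p.2}.ncard

/-- `G` is `(α,ρ,ε,t)`-sparse if for every vertex subset `U` with `|U| ≥ α|V|` there are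
pairwise disjoint subsets `W_1,…,W_t ⊆ U` with `|W_i| = ⌈ρ|U|⌉` and density
`d_G(W_1,…,W_t) = (∑_{i<j} e(W_i,W_j)) / (∑_{i<j} |W_i||W_j|)` at most `ε`. -/
def Sparse {V : Type*} [Fintype V] (G : SimpleGraph V) (α ρ ε : ℝ) (t : ℕ) : Prop :=
  ∀ U : Finset V, α * (Fintype.card V : ℝ) ≤ (U.card : ℝ) →
    ∃ Ws : Fin t → Finset V, (∀ i, Ws i ⊆ U) ∧ Pairwise (Function.onFun Disjoint Ws) ∧
      (∀ i, (Ws i).card = ⌈ρ * (U.card : ℝ)⌉₊) ∧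
      (∑ i : Fin t, ∑ j : Fin t, if i < j then (eBetween G (Ws i) (Ws j) : ℝ) else 0) ≤
        ε * ∑ i : Fin t, ∑ j : Fin t,
          if i < j then ((Ws i).card : ℝ) * ((Ws j).card : ℝ) else 0

open Finset
open scoped Classical

namespace Stmt14

variable {V : Type*} {G : SimpleGraph V}

lemma eB_eq (G : SimpleGraph V) (A B : Finset V) :
    eBetween G A B = ∑ a ∈ A, ∑ b ∈ B, (if G.Adj a b then 1 else 0) := by
  have hset : {p : V × V | p.1 ∈ A ∧ p.2 ∈ B ∧ G.Adj p.1 p.2}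
      = ↑((A ×ˢ B).filter (fun p => G.Adj p.1 p.2)) := by
    ext p
    simp [Finset.mem_filter, Finset.mem_product, and_assoc]
  rw [eBetween, hset, Set.ncard_coe_finset, Finset.card_filter, Finset.sum_product]

lemma eB_empty_left (G : SimpleGraph V) (B : Finset V) : eBetween G ∅ B = 0 := by
  rw [eB_eq]; simp

lemma eB_symm (G : SimpleGraph V) (A B : Finset V) : eBetween G A B = eBetween G B A := by
  rw [eB_eq, eB_eq, Finset.sum_comm]
  refine Finset.sum_congr rfl fun b _ => Finset.sum_congr rfl fun a _ => ?_
  by_cases h : G.Adj a b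
  · rw [if_pos h, if_pos h.symm]
  · rw [if_neg h, if_neg fun hh => h hh.symm]

lemma eB_mono {A' A B' B : Finset V} (hA : A' ⊆ A) (hB : B' ⊆ B) :
    eBetween G A' B' ≤ eBetween G A B := by
  rw [eB_eq, eB_eq]
  calc (∑ a ∈ A', ∑ b ∈ B', if G.Adj a b then 1 else 0)
      ≤ ∑ a ∈ A', ∑ b ∈ B, if G.Adj a b then 1 else 0 := by
        refine Finset.sum_le_sum fun a _ => ?_
        refine Finset.sum_le_sum_of_subset_of_nonneg hB fun _ _ _ => ?_
        positivity
    _ ≤ ∑ a ∈ A, ∑ b ∈ B, if G.Adj a b then 1 else 0 := by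
        refine Finset.sum_le_sum_of_subset_of_nonneg hA fun a _ _ => ?_
        positivity

lemma eB_sum_single (G : SimpleGraph V) (A Y : Finset V) :
    eBetween G A Y = ∑ v ∈ A, eBetween G {v} Y := by
  rw [eB_eq]
  refine Finset.sum_congr rfl fun a _ => ?_
  rw [eB_eq, Finset.sum_singleton]

lemma eB_biUnion_left {t : ℕ} (A : Fin t → Finset V)
    (hd : Pairwise (Function.onFun Disjoint A)) (C : Finset V) :
    eBetween G (Finset.univ.biUnion A) C = ∑ i, eBetween G (A i) C := by
  rw [eB_eq, Finset.sum_biUnion]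
  · exact Finset.sum_congr rfl fun i _ => (eB_eq G (A i) C).symm
  · intro i _ j _ hij
    exact hd hij

/-- split an ordered pair-sum into (full - diagonal)/2 for symmetric `F`. -/
lemma half_split {t : ℕ} (F : Fin t → Fin t → ℝ) (hsymm : ∀ i j, F i j = F j i) :
    (∑ i, ∑ j, if i < j then F i j else 0)
      = ((∑ i, ∑ j, F i j) - ∑ i, F i i) / 2 := by
  have hpoint : ∀ i j : Fin t, F i j =
      (if i < j then F i j else 0) + (if j < i then F i j else 0)
        + (if i = j then F i j else 0) := by
    intro i j
    rcases lt_trichotomy i j with h | h | h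
    · rw [if_pos h, if_neg (asymm h), if_neg (ne_of_lt h)]; ring
    · rw [if_neg (by simp [h]), if_neg (by simp [h]), if_pos h]; ring
    · rw [if_neg (asymm h), if_pos h, if_neg (ne_of_gt h)]; ring
  have hfull : (∑ i, ∑ j, F i j)
      = (∑ i, ∑ j, if i < j then F i j else 0)
        + ((∑ i : Fin t, ∑ j, if j < i then F i j else 0) + ∑ i, F i i) := by
    have hdiag : ∀ i : Fin t, (∑ j, if i = j then F i j else 0) = F i i := by
      intro i
      rw [Finset.sum_ite_eq (Finset.univ) i (F i), if_pos (Finset.mem_univ i)]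
    calc (∑ i, ∑ j, F i j)
        = ∑ i : Fin t, ∑ j, ((if i < j then F i j else 0) + (if j < i then F i j else 0)
            + (if i = j then F i j else 0)) := by
          exact Finset.sum_congr rfl fun i _ => Finset.sum_congr rfl fun j _ => hpoint i j
      _ = _ := by
          simp only [Finset.sum_add_distrib]
          rw [Finset.sum_congr rfl fun i (_ : i ∈ Finset.univ) => hdiag i]
          ring
  have hswap : (∑ i : Fin t, ∑ j, if j < i then F i j else 0)
      = ∑ i, ∑ j, if i < j then F i j else 0 := by
    rw [Finset.sum_comm]
    exact Finset.sum_congr rfl fun i _ => Finset.sum_congr rfl fun j _ => by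
      rw [hsymm j i]
  rw [hswap] at hfull
  linarith

lemma count_pairs (t : ℕ) :
    (∑ i : Fin t, ∑ j : Fin t, if i < j then (1 : ℝ) else 0) = ((t : ℝ) ^ 2 - t) / 2 := by
  rw [half_split (fun _ _ => (1 : ℝ)) (fun _ _ => rfl)]
  simp only [Finset.sum_const, Finset.card_univ, Fintype.card_fin, nsmul_eq_mul, mul_one]
  ring

lemma fin2_pairs (F : Fin 2 → Fin 2 → ℝ) :
    (∑ i, ∑ j, if i < j then F i j else 0) = F 0 1 := by
  rw [Fin.sum_univ_two, Fin.sum_univ_two, Fin.sum_univ_two]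
  rw [if_neg (lt_irrefl _), if_pos (by decide : (0:Fin 2) < 1),
    if_neg (by decide : ¬ (1:Fin 2) < 0), if_neg (lt_irrefl _)]
  ring

lemma pairSum_append {n : ℕ} (A B : Fin n → Finset V) :
    (∑ i : Fin (n+n), ∑ j : Fin (n+n),
        if i < j then (eBetween G (Fin.append A B i) (Fin.append A B j) : ℝ) else 0)
      = ((∑ i : Fin n, ∑ j : Fin n, if i < j then (eBetween G (A i) (A j) : ℝ) else 0)
        + (∑ i : Fin n, ∑ j : Fin n, if i < j then (eBetween G (B i) (B j) : ℝ) else 0))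
        + ∑ i : Fin n, ∑ j : Fin n, (eBetween G (A i) (B j) : ℝ) := by
  rw [half_split (fun i j => (eBetween G (Fin.append A B i) (Fin.append A B j) : ℝ))
      (fun i j => by exact congrArg Nat.cast (eB_symm G _ _)),
    half_split (fun i j => (eBetween G (A i) (A j) : ℝ))
      (fun i j => by exact congrArg Nat.cast (eB_symm G _ _)),
    half_split (fun i j => (eBetween G (B i) (B j) : ℝ))
      (fun i j => by exact congrArg Nat.cast (eB_symm G _ _))]
  have hful : (∑ i : Fin (n+n), ∑ j : Fin (n+n),
        (eBetween G (Fin.append A B i) (Fin.append A B j) : ℝ))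
      = (((∑ i : Fin n, ∑ j : Fin n, (eBetween G (A i) (A j) : ℝ))
        + (∑ i : Fin n, ∑ j : Fin n, (eBetween G (A i) (B j) : ℝ)))
        + ((∑ i : Fin n, ∑ j : Fin n, (eBetween G (B i) (A j) : ℝ))
        + (∑ i : Fin n, ∑ j : Fin n, (eBetween G (B i) (B j) : ℝ)))) := by
    rw [Fin.sum_univ_add]
    simp only [Fin.sum_univ_add, Fin.append_left, Fin.append_right]
    rw [Finset.sum_add_distrib, Finset.sum_add_distrib]
  have hdiag : (∑ i : Fin (n+n), (eBetween G (Fin.append A B i) (Fin.append A B i) : ℝ))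
      = (∑ i : Fin n, (eBetween G (A i) (A i) : ℝ))
        + ∑ i : Fin n, (eBetween G (B i) (B i) : ℝ) := by
    rw [Fin.sum_univ_add]
    simp only [Fin.append_left, Fin.append_right]
  have hBA : (∑ i : Fin n, ∑ j : Fin n, (eBetween G (B i) (A j) : ℝ))
      = ∑ i : Fin n, ∑ j : Fin n, (eBetween G (A i) (B j) : ℝ) := by
    rw [Finset.sum_comm]
    exact Finset.sum_congr rfl fun i _ => Finset.sum_congr rfl fun j _ => by rw [eB_symm]
  rw [hful, hdiag, hBA]
  ring

lemma good_half (G : SimpleGraph V) (U Y : Finset V) :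
    U.card ≤ 2 * (U.filter fun v =>
      U.card * eBetween G {v} Y ≤ 2 * eBetween G U Y).card := by
  set B := U.filter (fun v => U.card * eBetween G {v} Y ≤ 2 * eBetween G U Y) with hBdef
  by_contra hcon
  push_neg at hcon
  have hBU : B ⊆ U := Finset.filter_subset _ _
  have hbu : B.card ≤ U.card := Finset.card_le_card hBU
  have hCcard : (U \ B).card = U.card - B.card := Finset.card_sdiff_of_subset hBU
  have hCne : (U \ B).Nonempty := by
    rw [← Finset.card_pos, hCcard]; omega
  have hCprop : ∀ v ∈ U \ B, 2 * eBetween G U Y < U.card * eBetween G {v} Y := by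
    intro v hv
    have hv' := Finset.mem_sdiff.mp hv
    have : ¬ (U.card * eBetween G {v} Y ≤ 2 * eBetween G U Y) := by
      intro hle
      exact hv'.2 (Finset.mem_filter.mpr ⟨hv'.1, hle⟩)
    omega
  have hlt : (U \ B).card * (2 * eBetween G U Y)
      < U.card * ∑ v ∈ U \ B, eBetween G {v} Y := by
    calc (U \ B).card * (2 * eBetween G U Y)
        = ∑ _v ∈ U \ B, 2 * eBetween G U Y := by rw [Finset.sum_const, smul_eq_mul]
      _ < ∑ v ∈ U \ B, U.card * eBetween G {v} Y :=
          Finset.sum_lt_sum_of_nonempty hCne hCprop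
      _ = U.card * ∑ v ∈ U \ B, eBetween G {v} Y := by rw [Finset.mul_sum]
  have hsum : ∑ v ∈ U \ B, eBetween G {v} Y ≤ eBetween G U Y := by
    conv_rhs => rw [eB_sum_single]
    exact Finset.sum_le_sum_of_subset (Finset.sdiff_subset)
  have hfin : (U \ B).card * (2 * eBetween G U Y) < U.card * eBetween G U Y :=
    hlt.trans_le (Nat.mul_le_mul_left _ hsum)
  rcases Nat.eq_zero_or_pos (eBetween G U Y) with he | he
  · rw [he] at hfin; simp at hfin
  · have h2 : (2 * (U \ B).card) * eBetween G U Y < U.card * eBetween G U Y := by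
      calc (2 * (U \ B).card) * eBetween G U Y
          = (U \ B).card * (2 * eBetween G U Y) := by ring
        _ < U.card * eBetween G U Y := hfin
    have := Nat.lt_of_mul_lt_mul_right h2
    omega

lemma subset_good {U Y W : Finset V} (G : SimpleGraph V)
    (hW : W ⊆ U.filter fun v => U.card * eBetween G {v} Y ≤ 2 * eBetween G U Y) :
    U.card * eBetween G W Y ≤ 2 * W.card * eBetween G U Y := by
  rw [eB_sum_single, Finset.mul_sum]
  calc (∑ v ∈ W, U.card * eBetween G {v} Y)
      ≤ ∑ _v ∈ W, 2 * eBetween G U Y :=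
        Finset.sum_le_sum fun v hv => (Finset.mem_filter.mp (hW hv)).2
    _ = W.card * (2 * eBetween G U Y) := by rw [Finset.sum_const, smul_eq_mul]
    _ = 2 * W.card * eBetween G U Y := by ring

lemma glue {t : ℕ} {ε : ℝ} (hε : 0 ≤ ε) (W1 W2 : Finset V) (hd : Disjoint W1 W2)
    (w s : ℕ) (hw : 1 ≤ w)
    (A B : Fin (2^t) → Finset V)
    (hA1 : ∀ i, A i ⊆ W1) (hB1 : ∀ i, B i ⊆ W2)
    (hAd : Pairwise (Function.onFun Disjoint A)) (hBd : Pairwise (Function.onFun Disjoint B))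
    (hAc : ∀ i, (A i).card = s) (hBc : ∀ i, (B i).card = s)
    (hAe : (∑ i, ∑ j, if i < j then (eBetween G (A i) (A j) : ℝ) else 0)
      ≤ ε * (((4:ℝ)^t - 2^t)/2) * (s:ℝ)^2)
    (hBe : (∑ i, ∑ j, if i < j then (eBetween G (B i) (B j) : ℝ) else 0)
      ≤ ε * (((4:ℝ)^t - 2^t)/2) * (s:ℝ)^2)
    (he12 : (eBetween G W1 W2 : ℝ) ≤ ε/4 * ((w:ℝ) * w))
    (hG1 : w * (∑ i, eBetween G (A i) W2) ≤ 2 * 2^t * s * eBetween G W1 W2)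
    (hG2 : w * (∑ j, eBetween G (B j) (Finset.univ.biUnion A))
      ≤ 2 * 2^t * s * eBetween G W2 (Finset.univ.biUnion A)) :
    ∃ Ws : Fin (2^(t+1)) → Finset V,
      (∀ i, Ws i ⊆ W1 ∪ W2) ∧ Pairwise (Function.onFun Disjoint Ws) ∧
      (∀ i, (Ws i).card = s) ∧
      (∑ i, ∑ j, if i < j then (eBetween G (Ws i) (Ws j) : ℝ) else 0)
        ≤ ε * (((4:ℝ)^(t+1) - 2^(t+1))/2) * (s:ℝ)^2 := by
  have h2 : 2^(t+1) = 2^t + 2^t := by rw [pow_succ, mul_two]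
  refine ⟨fun i => Fin.append A B (Fin.cast h2 i), ?_, ?_, ?_, ?_⟩
  · intro i
    refine Fin.addCases (motive := fun x => Fin.append A B x ⊆ W1 ∪ W2) ?_ ?_ (Fin.cast h2 i)
    · intro j; rw [Fin.append_left]; exact (hA1 j).trans Finset.subset_union_left
    · intro j; rw [Fin.append_right]; exact (hB1 j).trans Finset.subset_union_right
  · have key : ∀ x y : Fin (2^t + 2^t), x ≠ y →
        Disjoint (Fin.append A B x) (Fin.append A B y) := by
      intro x
      refine Fin.addCases (motive := fun x => ∀ y, x ≠ y →
        Disjoint (Fin.append A B x) (Fin.append A B y)) ?_ ?_ x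
      · intro i y
        refine Fin.addCases (motive := fun y => Fin.castAdd _ i ≠ y →
          Disjoint (Fin.append A B (Fin.castAdd _ i)) (Fin.append A B y)) ?_ ?_ y
        · intro j hne
          rw [Fin.append_left, Fin.append_left]
          exact hAd fun hij => hne (by rw [hij])
        · intro j _
          rw [Fin.append_left, Fin.append_right]
          exact Disjoint.mono (hA1 i) (hB1 j) hd
      · intro i y
        refine Fin.addCases (motive := fun y => Fin.natAdd _ i ≠ y →
          Disjoint (Fin.append A B (Fin.natAdd _ i)) (Fin.append A B y)) ?_ ?_ y
        · intro j _
          rw [Fin.append_right, Fin.append_left]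
          exact Disjoint.mono (hB1 i) (hA1 j) hd.symm
        · intro j hne
          rw [Fin.append_right, Fin.append_right]
          exact hBd fun hij => hne (by rw [hij])
    intro i j hne
    refine key _ _ fun hc => hne ?_
    have hv := congrArg Fin.val hc
    exact Fin.ext hv
  · intro i
    refine Fin.addCases (motive := fun x => (Fin.append A B x).card = s) ?_ ?_ (Fin.cast h2 i)
    · intro j; rw [Fin.append_left]; exact hAc j
    · intro j; rw [Fin.append_right]; exact hBc j
  · have reidx : (∑ i : Fin (2^(t+1)), ∑ j : Fin (2^(t+1)),
          if i < j then (eBetween G (Fin.append A B (Fin.cast h2 i))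
            (Fin.append A B (Fin.cast h2 j)) : ℝ) else 0)
        = ∑ i : Fin (2^t + 2^t), ∑ j : Fin (2^t + 2^t),
          if i < j then (eBetween G (Fin.append A B i) (Fin.append A B j) : ℝ) else 0 := by
      rw [← Fin.sum_congr' (fun i : Fin (2^t + 2^t) => ∑ j : Fin (2^t + 2^t),
        if i < j then (eBetween G (Fin.append A B i) (Fin.append A B j) : ℝ) else 0) h2]
      refine Finset.sum_congr rfl fun i _ => ?_
      rw [← Fin.sum_congr' (fun j : Fin (2^t + 2^t) =>
        if Fin.cast h2 i < j then (eBetween G (Fin.append A B (Fin.cast h2 i))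
          (Fin.append A B j) : ℝ) else 0) h2]
      refine Finset.sum_congr rfl fun j _ => ?_
      exact if_congr Iff.rfl rfl rfl
    have hMW2 : eBetween G W2 (Finset.univ.biUnion A) = ∑ i, eBetween G (A i) W2 := by
      rw [eB_symm, eB_biUnion_left A hAd]
    have hXsum : (∑ j, eBetween G (B j) (Finset.univ.biUnion A))
        = ∑ i, ∑ j, eBetween G (A i) (B j) := by
      calc (∑ j, eBetween G (B j) (Finset.univ.biUnion A))
          = ∑ j, ∑ i, eBetween G (A i) (B j) := by
            refine Finset.sum_congr rfl fun j _ => ?_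
            rw [eB_symm, eB_biUnion_left A hAd]
        _ = ∑ i, ∑ j, eBetween G (A i) (B j) := Finset.sum_comm
    rw [hXsum, hMW2] at hG2
    have hwpos : (0:ℝ) < (w:ℝ) := by exact_mod_cast Nat.lt_of_lt_of_le Nat.zero_lt_one hw
    have hG1R : (w:ℝ) * (∑ i, (eBetween G (A i) W2 : ℝ))
        ≤ 2 * 2^t * s * (eBetween G W1 W2 : ℝ) := by exact_mod_cast hG1
    have hG2R : (w:ℝ) * (∑ i, ∑ j, (eBetween G (A i) (B j) : ℝ))
        ≤ 2 * 2^t * s * (∑ i, (eBetween G (A i) W2 : ℝ)) := by exact_mod_cast hG2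
    have h4 : (4:ℝ)^t = 2^t * 2^t := by rw [show (4:ℝ) = 2*2 by norm_num, mul_pow]
    have hcross : (∑ i, ∑ j, (eBetween G (A i) (B j) : ℝ)) ≤ ε * 4^t * (s:ℝ)^2 := by
      have step : (w:ℝ) * (w:ℝ) * (∑ i, ∑ j, (eBetween G (A i) (B j) : ℝ))
          ≤ (ε * 4^t * (s:ℝ)^2) * ((w:ℝ)*(w:ℝ)) := by
        calc (w:ℝ)*(w:ℝ)*(∑ i, ∑ j, (eBetween G (A i) (B j) : ℝ))
            = (w:ℝ)*((w:ℝ)*(∑ i, ∑ j, (eBetween G (A i) (B j) : ℝ))) := by ring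
          _ ≤ (w:ℝ)*(2*2^t*s*(∑ i, (eBetween G (A i) W2 : ℝ))) :=
              mul_le_mul_of_nonneg_left hG2R (le_of_lt hwpos)
          _ = (2*2^t*(s:ℝ))*((w:ℝ)*(∑ i, (eBetween G (A i) W2 : ℝ))) := by ring
          _ ≤ (2*2^t*(s:ℝ))*(2*2^t*s*(eBetween G W1 W2:ℝ)) :=
              mul_le_mul_of_nonneg_left hG1R (by positivity)
          _ = (2*2^t*(s:ℝ))*(2*2^t*(s:ℝ))*(eBetween G W1 W2:ℝ) := by ring
          _ ≤ (2*2^t*(s:ℝ))*(2*2^t*(s:ℝ))*(ε/4*((w:ℝ)*w)) :=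
              mul_le_mul_of_nonneg_left he12 (by positivity)
          _ = (ε * 4^t * (s:ℝ)^2) * ((w:ℝ)*(w:ℝ)) := by rw [h4]; ring
      have step2 : (∑ i, ∑ j, (eBetween G (A i) (B j) : ℝ)) * ((w:ℝ)*(w:ℝ))
          ≤ (ε * 4^t * (s:ℝ)^2) * ((w:ℝ)*(w:ℝ)) := by
        calc (∑ i, ∑ j, (eBetween G (A i) (B j) : ℝ)) * ((w:ℝ)*(w:ℝ))
            = (w:ℝ)*(w:ℝ)*(∑ i, ∑ j, (eBetween G (A i) (B j) : ℝ)) := by ring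
          _ ≤ _ := step
      exact le_of_mul_le_mul_right step2 (by positivity)
    have hiden : ε * (((4:ℝ)^(t+1) - 2^(t+1))/2) * (s:ℝ)^2
        = (ε * (((4:ℝ)^t - 2^t)/2) * (s:ℝ)^2 + ε * (((4:ℝ)^t - 2^t)/2) * (s:ℝ)^2)
          + ε * 4^t * (s:ℝ)^2 := by
      rw [pow_succ (4:ℝ), pow_succ (2:ℝ)]; ring
    have hXcast : (∑ i, ∑ j, (eBetween G (A i) (B j) : ℝ))
        = ∑ i : Fin (2^t), ∑ j : Fin (2^t), ((eBetween G (A i) (B j) : ℕ) : ℝ) := rfl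
    calc (∑ i : Fin (2^(t+1)), ∑ j : Fin (2^(t+1)),
          if i < j then (eBetween G (Fin.append A B (Fin.cast h2 i))
            (Fin.append A B (Fin.cast h2 j)) : ℝ) else 0)
        = _ := reidx
      _ = _ := pairSum_append A B
      _ ≤ (ε * (((4:ℝ)^t - 2^t)/2) * (s:ℝ)^2 + ε * (((4:ℝ)^t - 2^t)/2) * (s:ℝ)^2)
          + ε * 4^t * (s:ℝ)^2 := by
          refine add_le_add (add_le_add hAe hBe) hcross
      _ = ε * (((4:ℝ)^(t+1) - 2^(t+1))/2) * (s:ℝ)^2 := hiden.symm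

lemma claim [Fintype V] {α ρ ε : ℝ} (hρ0 : 0 < ρ) (hρ1 : ρ ≤ 1) (hα : 0 ≤ α) (hε : 0 ≤ ε)
    (hsp : Sparse G α ρ (ε/4) 2) :
    ∀ (k : ℕ) (U Y : Finset V) (s : ℕ),
      α * ρ * (2/ρ)^k * (Fintype.card V : ℝ) ≤ (U.card : ℝ) →
      s ≤ ⌈(ρ/2)^k * (U.card : ℝ)⌉₊ →
      ∃ Ws : Fin (2^k) → Finset V,
        (∀ i, Ws i ⊆ U) ∧ Pairwise (Function.onFun Disjoint Ws) ∧
        (∀ i, (Ws i).card = s) ∧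
        ((∑ i, ∑ j, if i < j then (eBetween G (Ws i) (Ws j) : ℝ) else 0)
          ≤ ε * (((4:ℝ)^k - 2^k)/2) * (s:ℝ)^2) ∧
        U.card * (∑ i, eBetween G (Ws i) Y) ≤ 2 * 2^k * s * eBetween G U Y := by
  intro k
  induction k with
  | zero =>
    intro U Y s hU hs
    haveI hsing : Subsingleton (Fin (2^0)) := by rw [pow_zero]; infer_instance
    have hs' : s ≤ U.card := by rwa [pow_zero, one_mul, Nat.ceil_natCast] at hs
    have hW : ∃ W : Finset V, W ⊆ U ∧ W.card = s ∧
        U.card * eBetween G W Y ≤ 2 * s * eBetween G U Y := by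
      rcases le_or_gt (U.card) (2*s) with hc | hc
      · obtain ⟨W, hWU, hWcard⟩ := Finset.exists_subset_card_eq hs'
        refine ⟨W, hWU, hWcard, ?_⟩
        calc U.card * eBetween G W Y ≤ (2*s) * eBetween G U Y :=
              Nat.mul_le_mul hc (eB_mono hWU (le_refl Y))
          _ = 2 * s * eBetween G U Y := by ring
      · have hgood := good_half G U Y
        have hsB : s ≤ (U.filter fun v =>
            U.card * eBetween G {v} Y ≤ 2 * eBetween G U Y).card := by omega
        obtain ⟨W, hWB, hWcard⟩ := Finset.exists_subset_card_eq hsB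
        refine ⟨W, hWB.trans (Finset.filter_subset _ _), hWcard, ?_⟩
        have := subset_good G hWB
        rwa [hWcard] at this
    obtain ⟨W, hWU, hWcard, hWg⟩ := hW
    refine ⟨fun _ => W, fun _ => hWU, ?_, fun _ => hWcard, ?_, ?_⟩
    · intro i j hij
      exact absurd (Subsingleton.elim i j) hij
    · have hzero : (∑ i : Fin (2^0), ∑ j : Fin (2^0),
          if i < j then (eBetween G W W : ℝ) else 0) = 0 := by
        refine Finset.sum_eq_zero fun i _ => Finset.sum_eq_zero fun j _ => ?_
        refine if_neg ?_
        cases Subsingleton.elim i j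
        exact lt_irrefl i
      rw [hzero]
      norm_num
    · have hsum : (∑ _i : Fin (2^0), eBetween G W Y) = eBetween G W Y := by
        rw [Finset.sum_const, Finset.card_univ, Fintype.card_fin, pow_zero, one_smul]
      rw [hsum]
      calc U.card * eBetween G W Y ≤ 2 * s * eBetween G U Y := hWg
        _ = 2 * 2^0 * s * eBetween G U Y := by ring
  | succ k ih =>
    intro U Y s hU hs
    by_cases hs0 : s = 0
    · subst hs0
      refine ⟨fun _ => ∅, fun _ => Finset.empty_subset U, ?_, fun _ => Finset.card_empty, ?_, ?_⟩
      · intro i j _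
        exact Finset.disjoint_empty_left _
      · have hzero : (∑ i : Fin (2^(k+1)), ∑ j : Fin (2^(k+1)),
            if i < j then (eBetween G (∅:Finset V) ∅ : ℝ) else 0) = 0 := by
          refine Finset.sum_eq_zero fun i _ => Finset.sum_eq_zero fun j _ => ?_
          rw [eB_empty_left]
          simp
        rw [hzero]
        norm_num
      · simp [eB_empty_left]
    · have hn : (0:ℝ) ≤ (Fintype.card V : ℝ) := by positivity
      have hαn : (0:ℝ) ≤ α * (Fintype.card V : ℝ) := by positivity
      have h2ρ : (1:ℝ) ≤ 2/ρ := by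
        rw [le_div_iff₀ hρ0]; linarith
      have hpow1 : (1:ℝ) ≤ (2/ρ)^k := by
        have := pow_le_pow_left₀ (by norm_num : (0:ℝ) ≤ 1) h2ρ k
        rwa [one_pow] at this
      have hr2 : ρ * (2/ρ) = 2 := by field_simp
      have hu2 : α * ρ * (2/ρ)^(k+1) * (Fintype.card V : ℝ)
          = 2*(α*(2/ρ)^k * (Fintype.card V : ℝ)) := by
        calc α * ρ * (2/ρ)^(k+1) * (Fintype.card V : ℝ)
            = α*(2/ρ)^k*(ρ*(2/ρ))*(Fintype.card V : ℝ) := by rw [pow_succ]; ring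
          _ = 2*(α*(2/ρ)^k * (Fintype.card V : ℝ)) := by rw [hr2]; ring
      have hgood := good_half G U Y
      set Bg := U.filter (fun v => U.card * eBetween G {v} Y ≤ 2 * eBetween G U Y) with hBgdef
      have hgoodR : (U.card : ℝ) ≤ 2 * (Bg.card : ℝ) := by exact_mod_cast hgood
      have hBgR : α*(2/ρ)^k*(Fintype.card V : ℝ) ≤ (Bg.card : ℝ) := by
        rw [hu2] at hU; linarith
      have hαB : α * (Fintype.card V : ℝ) ≤ (Bg.card : ℝ) := by
        have h1 := mul_le_mul_of_nonneg_left hpow1 hαn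
        have heq : α * (Fintype.card V : ℝ) * (2/ρ)^k
            = α*(2/ρ)^k*(Fintype.card V : ℝ) := by ring
        rw [mul_one, heq] at h1
        linarith
      obtain ⟨Wp, hWsub, hWdisj, hWcard, hWden⟩ := hsp Bg hαB
      set w := ⌈ρ * (Bg.card : ℝ)⌉₊ with hwdef
      have hc0 : (Wp 0).card = w := hWcard 0
      have hc1 : (Wp 1).card = w := hWcard 1
      have hwge : ρ * (Bg.card : ℝ) ≤ (w:ℝ) := Nat.le_ceil _
      -- IH condition 1 for both W's
      have hcond1 : α*ρ*(2/ρ)^k*(Fintype.card V : ℝ) ≤ (w:ℝ) := by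
        have h1 := mul_le_mul_of_nonneg_left hBgR (le_of_lt hρ0)
        have heq : ρ * (α*(2/ρ)^k*(Fintype.card V : ℝ))
            = α*ρ*(2/ρ)^k*(Fintype.card V : ℝ) := by ring
        rw [heq] at h1
        linarith
      -- IH condition 2
      have hcond2 : s ≤ ⌈(ρ/2)^k * (w:ℝ)⌉₊ := by
        refine hs.trans (Nat.ceil_mono ?_)
        have h1 : (ρ/2) * (U.card : ℝ) ≤ ρ * (Bg.card : ℝ) := by
          have := mul_le_mul_of_nonneg_left hgoodR (by positivity : (0:ℝ) ≤ ρ/2)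
          calc (ρ/2) * (U.card : ℝ) ≤ (ρ/2)*(2*(Bg.card:ℝ)) := this
            _ = ρ * (Bg.card : ℝ) := by ring
        calc (ρ/2)^(k+1) * (U.card : ℝ) = (ρ/2)^k * ((ρ/2) * (U.card : ℝ)) := by
              rw [pow_succ]; ring
          _ ≤ (ρ/2)^k * (w:ℝ) := by
              refine mul_le_mul_of_nonneg_left (h1.trans hwge) (by positivity)
      have hw1 : 1 ≤ w := by
        by_contra hw0
        have : w = 0 := by omega
        rw [this] at hcond2
        simp at hcond2
        omega
      -- apply IH twice
      have hcond1' : α*ρ*(2/ρ)^k*(Fintype.card V : ℝ) ≤ ((Wp 0).card : ℝ) := by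
        rw [hc0]; exact_mod_cast hcond1
      have hcond2' : s ≤ ⌈(ρ/2)^k * ((Wp 0).card : ℝ)⌉₊ := by rw [hc0]; exact hcond2
      obtain ⟨A, hA1, hAd, hAc, hAe, hAg⟩ := ih (Wp 0) (Wp 1) s hcond1' hcond2'
      have hcond1'' : α*ρ*(2/ρ)^k*(Fintype.card V : ℝ) ≤ ((Wp 1).card : ℝ) := by
        rw [hc1]; exact_mod_cast hcond1
      have hcond2'' : s ≤ ⌈(ρ/2)^k * ((Wp 1).card : ℝ)⌉₊ := by rw [hc1]; exact hcond2
      obtain ⟨B, hB1, hBd, hBc, hBe, hBg2⟩ :=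
        ih (Wp 1) (Finset.univ.biUnion A) s hcond1'' hcond2''
      -- pair density from hsp
      rw [fin2_pairs, fin2_pairs] at hWden
      rw [hc0, hc1] at hWden
      -- guarantees in glue form
      rw [hc0] at hAg
      rw [hc1] at hBg2
      have hdisj01 : Disjoint (Wp 0) (Wp 1) := hWdisj (by decide)
      obtain ⟨Ws, hWs1, hWs2, hWs3, hWs4⟩ :=
        glue hε (Wp 0) (Wp 1) hdisj01 w s hw1 A B hA1 hB1 hAd hBd hAc hBc hAe hBe
          (by exact hWden) hAg hBg2
      refine ⟨Ws, ?_, hWs2, hWs3, hWs4, ?_⟩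
      · intro i
        exact (hWs1 i).trans ((Finset.union_subset (hWsub 0) (hWsub 1)).trans
          (Finset.filter_subset _ _))
      · have hper : ∀ i, U.card * eBetween G (Ws i) Y ≤ 2*s*eBetween G U Y := by
          intro i
          have hsubB : Ws i ⊆ Bg := (hWs1 i).trans (Finset.union_subset (hWsub 0) (hWsub 1))
          have h := subset_good G hsubB
          rwa [hWs3 i] at h
        calc U.card * (∑ i, eBetween G (Ws i) Y)
            = ∑ i : Fin (2^(k+1)), U.card * eBetween G (Ws i) Y := by rw [Finset.mul_sum]
          _ ≤ ∑ _i : Fin (2^(k+1)), 2*s*eBetween G U Y :=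
              Finset.sum_le_sum fun i _ => hper i
          _ = 2^(k+1) * (2*s*eBetween G U Y) := by
              rw [Finset.sum_const, Finset.card_univ, Fintype.card_fin, smul_eq_mul]
          _ = 2*2^(k+1)*s*eBetween G U Y := by ring

end Stmt14

open Stmt14 in
/-- If a graph `G` is `(α, ρ, ε/4, 2)`-sparse, then for every positive integer `h`, `G` is
`((2/ρ)^{h-1} α, 2^{1-h} ρ^h, ε, 2^h)`-sparse. -/
theorem stmt_14 {V : Type*} [Fintype V] (G : SimpleGraph V) (α ρ ε : ℝ)
    (hα : α ∈ Set.Icc (0 : ℝ) 1) (hρ : ρ ∈ Set.Icc (0 : ℝ) 1) (hε : ε ∈ Set.Icc (0 : ℝ) 1)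
    (hsp : Sparse G α ρ (ε / 4) 2) (h : ℕ) (hh : 1 ≤ h) :
    Sparse G ((2 / ρ) ^ (h - 1) * α) ((2 : ℝ) ^ ((1 : ℤ) - h) * ρ ^ h) ε (2 ^ h) := by
  obtain ⟨hα0, hα1⟩ := hα
  obtain ⟨hρ0, hρ1⟩ := hρ
  obtain ⟨hε0, hε1⟩ := hε
  obtain ⟨k, rfl⟩ : ∃ k, h = k + 1 := ⟨h - 1, by omega⟩
  rcases eq_or_lt_of_le hρ0 with hρz | hρpos
  · -- ρ = 0
    intro U _
    have hrho : (2:ℝ)^((1:ℤ) - ((k+1:ℕ):ℤ)) * ρ^(k+1) = 0 := by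
      rw [← hρz, zero_pow (Nat.succ_ne_zero k), mul_zero]
    refine ⟨fun _ => ∅, fun _ => Finset.empty_subset U,
      fun i j _ => Finset.disjoint_empty_left _, ?_, ?_⟩
    · intro i
      rw [Finset.card_empty, hrho, zero_mul, Nat.ceil_zero]
    · simp [eB_empty_left]
  · -- ρ > 0
    intro U hU
    rw [Nat.add_sub_cancel] at hU
    have hn : (0:ℝ) ≤ (Fintype.card V : ℝ) := by positivity
    have hαn : (0:ℝ) ≤ α * (Fintype.card V : ℝ) := by positivity
    have h2ρ : (1:ℝ) ≤ 2/ρ := by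
      rw [le_div_iff₀ hρpos]; linarith
    have hpow1 : (1:ℝ) ≤ (2/ρ)^k := by
      have := pow_le_pow_left₀ (by norm_num : (0:ℝ) ≤ 1) h2ρ k
      rwa [one_pow] at this
    have hsize : ((2:ℝ)^((1:ℤ) - ((k+1:ℕ):ℤ)) * ρ^(k+1)) * (U.card:ℝ)
        = (ρ/2)^k * (ρ * (U.card:ℝ)) := by
      have hexp : ((1:ℤ) - ((k+1:ℕ):ℤ)) = -(k:ℤ) := by push_cast; ring
      rw [hexp, zpow_neg, zpow_natCast, div_pow]
      field_simp
      ring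
    have hceil : ⌈((2:ℝ)^((1:ℤ) - ((k+1:ℕ):ℤ)) * ρ^(k+1)) * (U.card:ℝ)⌉₊
        = ⌈(ρ/2)^k * (ρ * (U.card:ℝ))⌉₊ := by rw [hsize]
    set s := ⌈(ρ/2)^k * (ρ * (U.card:ℝ))⌉₊ with hsdef
    have hαU : α * (Fintype.card V : ℝ) ≤ (U.card : ℝ) := by
      have h1 := mul_le_mul_of_nonneg_left hpow1 hαn
      have heq : α * (Fintype.card V : ℝ) * (2/ρ)^k
          = (2/ρ)^k * α * (Fintype.card V : ℝ) := by ring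
      rw [mul_one, heq] at h1
      linarith
    by_cases hs0 : s = 0
    · refine ⟨fun _ => ∅, fun _ => Finset.empty_subset U,
        fun i j _ => Finset.disjoint_empty_left _, ?_, ?_⟩
      · intro i
        rw [Finset.card_empty, hceil]
        exact hs0.symm
      · simp [eB_empty_left]
    · obtain ⟨Wp, hWsub, hWdisj, hWcard, hWden⟩ := hsp U hαU
      set w := ⌈ρ * (U.card : ℝ)⌉₊ with hwdef
      have hc0 : (Wp 0).card = w := hWcard 0
      have hc1 : (Wp 1).card = w := hWcard 1
      have hwge : ρ * (U.card : ℝ) ≤ (w:ℝ) := Nat.le_ceil _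
      have hcond1 : α*ρ*(2/ρ)^k*(Fintype.card V : ℝ) ≤ (w:ℝ) := by
        have h1 := mul_le_mul_of_nonneg_left hU (le_of_lt hρpos)
        have heq : ρ * ((2/ρ)^k * α * (Fintype.card V : ℝ))
            = α*ρ*(2/ρ)^k*(Fintype.card V : ℝ) := by ring
        rw [heq] at h1
        linarith
      have hcond2 : s ≤ ⌈(ρ/2)^k * (w:ℝ)⌉₊ := by
        refine Nat.ceil_mono ?_
        exact mul_le_mul_of_nonneg_left hwge (by positivity)
      have hw1 : 1 ≤ w := by
        by_contra hw0
        have hwz : w = 0 := by omega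
        rw [hwz] at hcond2
        simp at hcond2
        omega
      have hcond1' : α*ρ*(2/ρ)^k*(Fintype.card V : ℝ) ≤ ((Wp 0).card : ℝ) := by
        rw [hc0]; exact_mod_cast hcond1
      have hcond2' : s ≤ ⌈(ρ/2)^k * ((Wp 0).card : ℝ)⌉₊ := by rw [hc0]; exact hcond2
      obtain ⟨A, hA1, hAd, hAc, hAe, hAg⟩ :=
        claim hρpos hρ1 hα0 hε0 hsp k (Wp 0) (Wp 1) s hcond1' hcond2'
      have hcond1'' : α*ρ*(2/ρ)^k*(Fintype.card V : ℝ) ≤ ((Wp 1).card : ℝ) := by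
        rw [hc1]; exact_mod_cast hcond1
      have hcond2'' : s ≤ ⌈(ρ/2)^k * ((Wp 1).card : ℝ)⌉₊ := by rw [hc1]; exact hcond2
      obtain ⟨B, hB1, hBd, hBc, hBe, hBg2⟩ :=
        claim hρpos hρ1 hα0 hε0 hsp k (Wp 1) (Finset.univ.biUnion A) s hcond1'' hcond2''
      rw [fin2_pairs, fin2_pairs] at hWden
      rw [hc0, hc1] at hWden
      rw [hc0] at hAg
      rw [hc1] at hBg2
      have hdisj01 : Disjoint (Wp 0) (Wp 1) := hWdisj (by decide)
      obtain ⟨Ws, hWs1, hWs2, hWs3, hWs4⟩ :=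
        glue hε0 (Wp 0) (Wp 1) hdisj01 w s hw1 A B hA1 hB1 hAd hBd hAc hBc hAe hBe
          (by exact hWden) hAg hBg2
      refine ⟨Ws, ?_, hWs2, ?_, ?_⟩
      · intro i
        exact (hWs1 i).trans (Finset.union_subset (hWsub 0) (hWsub 1))
      · intro i
        rw [hWs3 i, hceil]
      · -- density
        have hprod : (∑ i : Fin (2^(k+1)), ∑ j : Fin (2^(k+1)),
              if i < j then ((Ws i).card : ℝ) * ((Ws j).card : ℝ) else 0)
            = (((2^(k+1):ℕ):ℝ)^2 - ((2^(k+1):ℕ):ℝ))/2 * ((s:ℝ)*(s:ℝ)) := by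
          have hpoint : ∀ i j : Fin (2^(k+1)),
              (if i < j then ((Ws i).card : ℝ) * ((Ws j).card : ℝ) else 0)
                = (if i < j then (1:ℝ) else 0) * ((s:ℝ)*(s:ℝ)) := by
            intro i j
            rw [hWs3 i, hWs3 j]
            split_ifs <;> ring
          calc (∑ i : Fin (2^(k+1)), ∑ j : Fin (2^(k+1)),
              if i < j then ((Ws i).card : ℝ) * ((Ws j).card : ℝ) else 0)
              = ∑ i : Fin (2^(k+1)), ∑ j : Fin (2^(k+1)),
                (if i < j then (1:ℝ) else 0) * ((s:ℝ)*(s:ℝ)) := by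
                exact Finset.sum_congr rfl fun i _ => Finset.sum_congr rfl fun j _ => hpoint i j
            _ = (∑ i : Fin (2^(k+1)), ∑ j : Fin (2^(k+1)),
                if i < j then (1:ℝ) else 0) * ((s:ℝ)*(s:ℝ)) := by
                rw [Finset.sum_mul]
                exact Finset.sum_congr rfl fun i _ => by rw [Finset.sum_mul]
            _ = (((2^(k+1):ℕ):ℝ)^2 - ((2^(k+1):ℕ):ℝ))/2 * ((s:ℝ)*(s:ℝ)) := by
                rw [count_pairs]
        have hCeq : ε * (((4:ℝ)^(k+1) - 2^(k+1))/2) * (s:ℝ)^2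
            = ε * ((((2^(k+1):ℕ):ℝ)^2 - ((2^(k+1):ℕ):ℝ))/2 * ((s:ℝ)*(s:ℝ))) := by
          have h1 : ((2:ℝ)^(k+1))^2 = (4:ℝ)^(k+1) := by
            rw [← pow_mul, mul_comm (k+1) 2, pow_mul]
            norm_num
          push_cast
          rw [h1]
          ring
        rw [hprod, ← hCeq]
        exact hWs4
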